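/- For k, l ∈ ℕ and A ∈ ℂ avoiding the poles, define f^{(k)}_l(A) = Γ((A+1+l)/2) Γ((A−l)/2) / (2^{2k+2} Γ((A+2k+3+l)/2) Γ((A+2k+2−l)/2)). Then f^{(k)}_l(A) has the partial-fraction decomposition f^{(k)}_l(A) = Σ_{i=0}^{k} [b_i/(A+2i−l) + c_i/(A+2k−2i+1+l)] with b_i = −c_i = a^{(k)}_{l,i}/((2k)!(2l+1)), where a^{(k)}_{l,i} = (−1)^i (2l+1)(2k)!/(2^{2k+1} i!(k−i)!) · Γ(l−i+1/2)/Γ(l+k−i+3/2). -/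

import Mathlib

open Complex

/-- `f^{(k)}_l(A)` of Appendix B of the paper. -/
noncomputable def fkl (k l : ℕ) (A : ℂ) : ℂ :=
  Complex.Gamma ((A + 1 + l) / 2) * Complex.Gamma ((A - l) / 2) /
    (2 ^ (2 * k + 2) * Complex.Gamma ((A + 2 * k + 3 + l) / 2) *
      Complex.Gamma ((A + 2 * k + 2 - l) / 2))

/-- `a^{(k)}_{l,i}`. -/
noncomputable def akli (k l i : ℕ) : ℂ :=
  (-1) ^ i * (2 * (l : ℂ) + 1) * ((2 * k).factorial : ℂ) /
    (2 ^ (2 * k + 1) * (i.factorial : ℂ) * ((k - i).factorial : ℂ)) *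
    Complex.Gamma ((l : ℂ) - i + 1 / 2) / Complex.Gamma ((l : ℂ) + k - i + 3 / 2)

open Finset

set_option maxHeartbeats 1000000


lemma ne_zero_of_int (x : ℂ) (n : ℤ) (hn : n ≠ 0) (h : (n : ℂ) = x) : x ≠ 0 :=
  h ▸ Int.cast_ne_zero.mpr hn

lemma pf2 (x c : ℂ) (hx : x ≠ 0) (hc : c ≠ 0) (hy : x + c ≠ 0) :
    x⁻¹ * (x + c)⁻¹ = c⁻¹ * x⁻¹ - c⁻¹ * (x + c)⁻¹ := by
  have h1 := mul_inv_cancel₀ hx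
  have h2 := mul_inv_cancel₀ hy
  have h3 := mul_inv_cancel₀ hc
  linear_combination (-(c⁻¹ * (x + c)⁻¹)) * h1 + (c⁻¹ * x⁻¹) * h2 - (x⁻¹ * (x + c)⁻¹) * h3

lemma pf3 (x a c : ℂ) (hx : x ≠ 0) (ha : a ≠ 0) (hc : c ≠ 0)
    (hy : x + a ≠ 0) (hb : a + c ≠ 0) (hz : x + a + c ≠ 0) :
    x⁻¹ * ((x + a)⁻¹ * (x + a + c)⁻¹)
      = a⁻¹ * (a + c)⁻¹ * x⁻¹ - a⁻¹ * c⁻¹ * (x + a)⁻¹ + (a + c)⁻¹ * c⁻¹ * (x + a + c)⁻¹ := by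
  have h1 := pf2 (x + a) c hy hc hz
  have h2 := pf2 x a hx ha hy
  have h3 := pf2 x (a + c) hx hb (by intro h; exact hz (by linear_combination h))
  have h4 := pf2 a c ha hc hb
  linear_combination x⁻¹ * h1 + c⁻¹ * h2 - c⁻¹ * h3 - x⁻¹ * h4

lemma Hfact (n : ℕ) : ∏ j ∈ Finset.range n, (2 * (j : ℂ) + 2) = 2 ^ n * n.factorial := by
  induction n with
  | zero => simp
  | succ n ih =>
    rw [Finset.prod_range_succ, ih]
    push_cast [Nat.factorial_succ]
    ring

lemma Hrev (n : ℕ) : ∀ x : ℂ, ∏ j ∈ Finset.range n, (x - 2 * j) =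
    ∏ j ∈ Finset.range n, (x + 2 * j + 2 - 2 * n) := by
  induction n with
  | zero => simp
  | succ n ih =>
    intro x
    rw [Finset.prod_range_succ, ih x, Finset.prod_range_succ']
    congr 1
    · apply Finset.prod_congr rfl
      intro j _
      push_cast
      ring
    · push_cast
      ring

lemma prod_even (k : ℕ) : ∏ j ∈ Finset.range (k + 1), (2 * (j : ℂ) - 2 * k - 2)
    = (-1) ^ (k + 1) * 2 ^ (k + 1) * (k + 1).factorial := by
  have h1 : ∏ j ∈ Finset.range (k + 1), (2 * (j : ℂ) - 2 * k - 2)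
      = ∏ j ∈ Finset.range (k + 1), (-1) * ((2 * (k : ℂ) + 2) - 2 * j) :=
    Finset.prod_congr rfl (by intros; ring)
  rw [h1, Finset.prod_mul_distrib, Finset.prod_const, Hrev (k + 1) (2 * (k : ℂ) + 2)]
  have h2 : ∏ j ∈ Finset.range (k + 1), ((2 * (k : ℂ) + 2) + 2 * j + 2 - 2 * ((k + 1 : ℕ) : ℂ))
      = ∏ j ∈ Finset.range (k + 1), (2 * (j : ℂ) + 2) :=
    Finset.prod_congr rfl (by intros; push_cast; ring)
  rw [h2, Hfact, Finset.card_range]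
  ring

lemma prod_shift (k l : ℕ) : ∏ j ∈ Finset.range (k + 1), (2 * (j : ℂ) - 2 * l - 2 * k - 3)
    = (-1) ^ (k + 1) * ∏ j ∈ Finset.range (k + 1), (2 * (l : ℂ) + 3 + 2 * j) := by
  have h1 : ∏ j ∈ Finset.range (k + 1), (2 * (j : ℂ) - 2 * l - 2 * k - 3)
      = ∏ j ∈ Finset.range (k + 1), (-1) * ((2 * (l : ℂ) + 2 * k + 3) - 2 * j) :=
    Finset.prod_congr rfl (by intros; ring)
  rw [h1, Finset.prod_mul_distrib, Finset.prod_const, Hrev (k + 1) (2 * (l : ℂ) + 2 * k + 3)]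
  have h2 : ∏ j ∈ Finset.range (k + 1), ((2 * (l : ℂ) + 2 * k + 3) + 2 * j + 2 - 2 * ((k + 1 : ℕ) : ℂ))
      = ∏ j ∈ Finset.range (k + 1), (2 * (l : ℂ) + 3 + 2 * j) :=
    Finset.prod_congr rfl (by intros; push_cast; ring)
  rw [h2, Finset.card_range]

lemma prod_combo (k l : ℕ) :
    (∏ j ∈ Finset.range (k + 1), (2 * (j : ℂ) - 2 * l - 2 * k - 3)) *
      ∏ j ∈ Finset.range (k + 1), (2 * (j : ℂ) - 2 * k - 2)
    = (∏ j ∈ Finset.range (k + 1), (2 * (l : ℂ) + 3 + 2 * j)) *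
        (2 ^ (k + 1) * ((k + 1).factorial : ℂ)) := by
  rw [prod_shift, prod_even]
  have hneg : ((-1 : ℂ)) ^ (k + 1) * ((-1 : ℂ)) ^ (k + 1) = 1 := by
    rw [← pow_add]
    exact Even.neg_one_pow ⟨k + 1, by ring⟩
  linear_combination (∏ j ∈ Finset.range (k + 1), (2 * (l : ℂ) + 3 + 2 * j)) *
    (2 ^ (k + 1) * ((k + 1).factorial : ℂ)) * hneg

noncomputable def Bc (k l i : ℕ) : ℂ :=
  (-1) ^ i * ((2 : ℂ) ^ k * i.factorial * (k - i).factorial *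
    ∏ j ∈ Finset.range (k + 1), (2 * (l : ℂ) + 1 + 2 * j - 2 * i)) ⁻¹

lemma prod_odd_ne (k l i : ℕ) :
    (∏ j ∈ Finset.range (k + 1), (2 * (l : ℂ) + 1 + 2 * j - 2 * i)) ≠ 0 := by
  apply Finset.prod_ne_zero_iff.mpr
  intro j _
  exact ne_zero_of_int _ (2 * l + 1 + 2 * j - 2 * i) (by omega) (by push_cast; ring)

lemma Bsucc_a (k l i : ℕ) (hik : i ≤ k) :
    Bc (k + 1) l i = Bc k l i * (2 * (k : ℂ) + 2 - 2 * i)⁻¹ * (2 * (l : ℂ) + 2 * k + 3 - 2 * i)⁻¹ := by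
  have hcast : ((k - i : ℕ) : ℂ) = (k : ℂ) - i := by
    push_cast [Nat.cast_sub hik]; ring
  have hsub : (k + 1 - i) = (k - i) + 1 := by omega
  have key : ((2 : ℂ) ^ (k + 1) * (i.factorial : ℂ) * (((k + 1) - i).factorial : ℂ) *
      ∏ j ∈ Finset.range (k + 1 + 1), (2 * (l : ℂ) + 1 + 2 * j - 2 * i))
      = ((2 : ℂ) ^ k * (i.factorial : ℂ) * ((k - i).factorial : ℂ) *
        ∏ j ∈ Finset.range (k + 1), (2 * (l : ℂ) + 1 + 2 * j - 2 * i)) *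
        ((2 * (k : ℂ) + 2 - 2 * i) * (2 * l + 2 * k + 3 - 2 * i)) := by
    rw [Finset.prod_range_succ, hsub, Nat.factorial_succ]
    push_cast [hcast]
    ring
  unfold Bc
  rw [key]
  simp only [mul_inv]
  ring

lemma Bsucc_b (k l i : ℕ) (hik : i ≤ k) :
    Bc (k + 1) l (i + 1) = Bc k l i * (2 * (i : ℂ) + 1 - 2 * l)⁻¹ * (2 * (i : ℂ) + 2)⁻¹ := by
  have hsub : (k + 1 - (i + 1)) = (k - i) := by omega
  have key : ((2 : ℂ) ^ (k + 1) * ((i + 1).factorial : ℂ) * ((k + 1 - (i + 1)).factorial : ℂ) *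
      ∏ j ∈ Finset.range (k + 1 + 1), (2 * (l : ℂ) + 1 + 2 * j - 2 * ((i + 1 : ℕ) : ℂ)))
      = (((2 : ℂ) ^ k * (i.factorial : ℂ) * ((k - i).factorial : ℂ) *
        ∏ j ∈ Finset.range (k + 1), (2 * (l : ℂ) + 1 + 2 * j - 2 * i)) *
        ((2 * (i : ℂ) + 1 - 2 * l) * (2 * i + 2))) * (-1) := by
    rw [Finset.prod_range_succ', hsub, Nat.factorial_succ]
    have heq : (∏ j ∈ Finset.range (k + 1), (2 * (l : ℂ) + 1 + 2 * ((j + 1 : ℕ) : ℂ) - 2 * ((i + 1 : ℕ) : ℂ)))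
        = ∏ j ∈ Finset.range (k + 1), (2 * (l : ℂ) + 1 + 2 * j - 2 * i) := by
      apply Finset.prod_congr rfl; intro j _; push_cast; ring
    rw [heq]
    push_cast
    ring
  unfold Bc
  rw [key, pow_succ]
  simp only [mul_inv, inv_neg, inv_one]
  ring

lemma main_pf (l k : ℕ) : ∀ (A : ℂ),
    (∀ j : ℕ, j ≤ k → A - l + 2 * (j : ℂ) ≠ 0) →
    (∀ j : ℕ, j ≤ k → A + l + 1 + 2 * (j : ℂ) ≠ 0) →
    ∏ j ∈ Finset.range (k + 1), ((A - l + 2 * (j : ℂ))⁻¹ * (A + l + 1 + 2 * (j : ℂ))⁻¹)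
      = ∑ i ∈ Finset.range (k + 1),
          Bc k l i * ((A + 2 * (i : ℂ) - l)⁻¹ - (A + 2 * (k : ℂ) - 2 * i + 1 + l)⁻¹) := by
  induction k with
  | zero =>
    intro A h1 h2
    have hp := h1 0 le_rfl
    have hq := h2 0 le_rfl
    simp only [Nat.cast_zero, mul_zero, add_zero, sub_zero] at hp hq ⊢
    rw [Finset.prod_range_one, Finset.sum_range_one]
    simp only [Nat.cast_zero, mul_zero, add_zero, sub_zero]
    have hB : Bc 0 l 0 = (2 * (l : ℂ) + 1)⁻¹ := by
      simp [Bc]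
    rw [hB]
    have h2l : 2 * (l : ℂ) + 1 ≠ 0 := ne_zero_of_int _ (2 * l + 1) (by omega) (by push_cast; ring)
    have hy : (A - l) + (2 * (l : ℂ) + 1) ≠ 0 := by
      intro h; exact hq (by linear_combination h)
    have e := pf2 (A - (l : ℂ)) (2 * (l : ℂ) + 1) hp h2l hy
    linear_combination e
  | succ k ih =>
    intro A h1 h2
    have h1' : ∀ j : ℕ, j ≤ k → A - l + 2 * (j : ℂ) ≠ 0 := fun j hj => h1 j (by omega)
    have h2' : ∀ j : ℕ, j ≤ k → A + l + 1 + 2 * (j : ℂ) ≠ 0 := fun j hj => h2 j (by omega)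
    rw [Finset.prod_range_succ, ih A h1' h2', Finset.sum_mul]
    have expand : ∀ i ∈ Finset.range (k + 1),
        Bc k l i * ((A + 2 * (i : ℂ) - l)⁻¹ - (A + 2 * (k : ℂ) - 2 * i + 1 + l)⁻¹) *
          ((A - l + 2 * ((k + 1 : ℕ) : ℂ))⁻¹ * (A + l + 1 + 2 * ((k + 1 : ℕ) : ℂ))⁻¹)
        = (Bc (k + 1) l i * (A + 2 * (i : ℂ) - l)⁻¹
            - Bc (k + 1) l (i + 1) * (A + 2 * (k : ℂ) - 2 * i + 1 + l)⁻¹)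
          + (Bc k l i * (-((2 * (k : ℂ) + 2 - 2 * i)⁻¹ * (2 * (l : ℂ) + 1)⁻¹)
              + (2 * (i : ℂ) + 1 - 2 * l)⁻¹ * (2 * (l : ℂ) + 1)⁻¹))
            * (A - l + 2 * ((k + 1 : ℕ) : ℂ))⁻¹
          + (Bc k l i * ((2 * (l : ℂ) + 2 * k + 3 - 2 * i)⁻¹ * (2 * (l : ℂ) + 1)⁻¹
              - (2 * (i : ℂ) + 2)⁻¹ * (2 * (l : ℂ) + 1)⁻¹))
            * (A + l + 1 + 2 * ((k + 1 : ℕ) : ℂ))⁻¹ := by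
      intro i hi
      have hik : i ≤ k := by have := Finset.mem_range.mp hi; omega
      rw [Bsucc_a k l i hik, Bsucc_b k l i hik]
      have hp : A + 2 * (i : ℂ) - l ≠ 0 := by
        have h := h1' i hik; intro h0; exact h (by linear_combination h0)
      have hr : A + 2 * (k : ℂ) - 2 * i + 1 + l ≠ 0 := by
        have h := h2 (k - i) (by omega)
        have hc : ((k - i : ℕ) : ℂ) = (k : ℂ) - i := by push_cast [Nat.cast_sub hik]; ring
        rw [hc] at h
        intro h0; exact h (by linear_combination h0)
      have hd1 : A - l + 2 * ((k + 1 : ℕ) : ℂ) ≠ 0 := h1 (k + 1) le_rfl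
      have hd2 : A + l + 1 + 2 * ((k + 1 : ℕ) : ℂ) ≠ 0 := h2 (k + 1) le_rfl
      have c1 : (2 * (k : ℂ) + 2 - 2 * i) ≠ 0 :=
        ne_zero_of_int _ (2 * k + 2 - 2 * i) (by omega) (by push_cast; ring)
      have c3 : (2 * (i : ℂ) + 1 - 2 * l) ≠ 0 :=
        ne_zero_of_int _ (2 * i + 1 - 2 * l) (by omega) (by push_cast; ring)
      have c6 : (2 * (l : ℂ) + 1) ≠ 0 :=
        ne_zero_of_int _ (2 * l + 1) (by omega) (by push_cast; ring)
      have hb1 : (2 * (k : ℂ) + 2 - 2 * i) + (2 * (l : ℂ) + 1) ≠ 0 :=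
        ne_zero_of_int _ (2 * k + 2 - 2 * i + (2 * l + 1)) (by omega) (by push_cast; ring)
      have hb2 : (2 * (i : ℂ) + 1 - 2 * l) + (2 * (l : ℂ) + 1) ≠ 0 :=
        ne_zero_of_int _ (2 * i + 2) (by omega) (by push_cast; ring)
      have hy1 : (A + 2 * (i : ℂ) - l) + (2 * (k : ℂ) + 2 - 2 * i) ≠ 0 := by
        intro h0; exact hd1 (by push_cast; linear_combination h0)
      have hz1 : (A + 2 * (i : ℂ) - l) + (2 * (k : ℂ) + 2 - 2 * i) + (2 * (l : ℂ) + 1) ≠ 0 := by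
        intro h0; exact hd2 (by push_cast; linear_combination h0)
      have hy2 : (A + 2 * (k : ℂ) - 2 * i + 1 + l) + (2 * (i : ℂ) + 1 - 2 * l) ≠ 0 := by
        intro h0; exact hd1 (by push_cast; linear_combination h0)
      have hz2 : (A + 2 * (k : ℂ) - 2 * i + 1 + l) + (2 * (i : ℂ) + 1 - 2 * l) + (2 * (l : ℂ) + 1) ≠ 0 := by
        intro h0; exact hd2 (by push_cast; linear_combination h0)
      have e1 := pf3 (A + 2 * (i : ℂ) - l) (2 * (k : ℂ) + 2 - 2 * i) (2 * (l : ℂ) + 1)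
        hp c1 c6 hy1 hb1 hz1
      have e2 := pf3 (A + 2 * (k : ℂ) - 2 * i + 1 + l) (2 * (i : ℂ) + 1 - 2 * l) (2 * (l : ℂ) + 1)
        hr c3 c6 hy2 hb2 hz2
      push_cast
      linear_combination (Bc k l i) * e1 - (Bc k l i) * e2
    refine Eq.trans (Finset.sum_congr rfl expand) ?_
    rw [Finset.sum_add_distrib, Finset.sum_add_distrib, Finset.sum_sub_distrib,
      ← Finset.sum_mul, ← Finset.sum_mul]
    have hS1 : (∑ i ∈ Finset.range (k + 1), Bc k l i *
          (-((2 * (k : ℂ) + 2 - 2 * i)⁻¹ * (2 * (l : ℂ) + 1)⁻¹)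
            + (2 * (i : ℂ) + 1 - 2 * l)⁻¹ * (2 * (l : ℂ) + 1)⁻¹))
        = Bc (k + 1) l (k + 1) := by
      have hyp1 : ∀ j : ℕ, j ≤ k → ((l : ℂ) - 2 * k - 2) - l + 2 * (j : ℂ) ≠ 0 := fun j hj =>
        ne_zero_of_int _ (2 * j - 2 * k - 2) (by omega) (by push_cast; ring)
      have hyp2 : ∀ j : ℕ, j ≤ k → ((l : ℂ) - 2 * k - 2) + l + 1 + 2 * (j : ℂ) ≠ 0 := fun j hj =>
        ne_zero_of_int _ (2 * l - 2 * k - 1 + 2 * j) (by omega) (by push_cast; ring)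
      have ih' := ih ((l : ℂ) - 2 * k - 2) hyp1 hyp2
      have step1 : (∑ i ∈ Finset.range (k + 1), Bc k l i *
            (-((2 * (k : ℂ) + 2 - 2 * i)⁻¹ * (2 * (l : ℂ) + 1)⁻¹)
              + (2 * (i : ℂ) + 1 - 2 * l)⁻¹ * (2 * (l : ℂ) + 1)⁻¹))
          = (2 * (l : ℂ) + 1)⁻¹ * ∑ i ∈ Finset.range (k + 1), Bc k l i *
              ((((l : ℂ) - 2 * k - 2) + 2 * (i : ℂ) - l)⁻¹
                - (((l : ℂ) - 2 * k - 2) + 2 * (k : ℂ) - 2 * i + 1 + l)⁻¹) := by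
        rw [Finset.mul_sum]
        refine Finset.sum_congr rfl fun i _ => ?_
        rw [show ((l : ℂ) - 2 * k - 2) + 2 * (i : ℂ) - l = -(2 * (k : ℂ) + 2 - 2 * i) from by ring,
          show ((l : ℂ) - 2 * k - 2) + 2 * (k : ℂ) - 2 * (i : ℂ) + 1 + l
            = -(2 * (i : ℂ) + 1 - 2 * l) from by ring, inv_neg, inv_neg]
        ring
      rw [step1, ← ih']
      have step2 : (∏ j ∈ Finset.range (k + 1), ((((l : ℂ) - 2 * k - 2) - l + 2 * (j : ℂ))⁻¹ *
            (((l : ℂ) - 2 * k - 2) + l + 1 + 2 * (j : ℂ))⁻¹))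
          = (∏ j ∈ Finset.range (k + 1), (2 * (j : ℂ) - 2 * k - 2))⁻¹ *
              (∏ j ∈ Finset.range (k + 1), (2 * (l : ℂ) - 2 * k - 1 + 2 * j))⁻¹ := by
        rw [← Finset.prod_inv_distrib, ← Finset.prod_inv_distrib, ← Finset.prod_mul_distrib]
        refine Finset.prod_congr rfl fun j _ => ?_
        rw [show ((l : ℂ) - 2 * k - 2) - l + 2 * (j : ℂ) = 2 * (j : ℂ) - 2 * k - 2 from by ring,
          show ((l : ℂ) - 2 * k - 2) + l + 1 + 2 * (j : ℂ) = 2 * (l : ℂ) - 2 * k - 1 + 2 * j from by ring]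
      rw [step2, prod_even]
      have hBval : Bc (k + 1) l (k + 1)
          = (-1) ^ (k + 1) * ((2 : ℂ) ^ (k + 1))⁻¹ * (((k + 1).factorial : ℂ))⁻¹ *
              (∏ j ∈ Finset.range (k + 1), (2 * (l : ℂ) - 2 * k - 1 + 2 * j))⁻¹ *
              (2 * (l : ℂ) + 1)⁻¹ := by
        unfold Bc
        rw [Nat.sub_self, Nat.factorial_zero, Finset.prod_range_succ]
        rw [show (2 * (l : ℂ) + 1 + 2 * ((k + 1 : ℕ) : ℂ) - 2 * ((k + 1 : ℕ) : ℂ)) = 2 * (l : ℂ) + 1 from by ring]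
        have hpr : (∏ j ∈ Finset.range (k + 1), (2 * (l : ℂ) + 1 + 2 * (j : ℂ) - 2 * ((k + 1 : ℕ) : ℂ)))
            = ∏ j ∈ Finset.range (k + 1), (2 * (l : ℂ) - 2 * k - 1 + 2 * j) := by
          refine Finset.prod_congr rfl fun j _ => ?_
          push_cast; ring
        rw [hpr]
        simp only [mul_inv, Nat.cast_one]
        ring
      rw [hBval]
      have hs : (((-1 : ℂ)) ^ (k + 1))⁻¹ = ((-1 : ℂ)) ^ (k + 1) := by
        rw [← inv_pow, inv_neg, inv_one]
      rw [show ((-1 : ℂ) ^ (k + 1) * 2 ^ (k + 1) * ((k + 1).factorial : ℂ))⁻¹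
          = ((-1 : ℂ) ^ (k + 1))⁻¹ * ((2 : ℂ) ^ (k + 1) * ((k + 1).factorial : ℂ))⁻¹ from by
        rw [mul_assoc, mul_inv], hs]
      ring
    have hS2 : (∑ i ∈ Finset.range (k + 1), Bc k l i *
          ((2 * (l : ℂ) + 2 * k + 3 - 2 * i)⁻¹ * (2 * (l : ℂ) + 1)⁻¹
            - (2 * (i : ℂ) + 2)⁻¹ * (2 * (l : ℂ) + 1)⁻¹))
        = -(Bc (k + 1) l 0) := by
      have hyp1 : ∀ j : ℕ, j ≤ k → (-(l : ℂ) - 2 * k - 3) - l + 2 * (j : ℂ) ≠ 0 := fun j hj =>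
        ne_zero_of_int _ (2 * j - 2 * l - 2 * k - 3) (by omega) (by push_cast; ring)
      have hyp2 : ∀ j : ℕ, j ≤ k → (-(l : ℂ) - 2 * k - 3) + l + 1 + 2 * (j : ℂ) ≠ 0 := fun j hj =>
        ne_zero_of_int _ (2 * j - 2 * k - 2) (by omega) (by push_cast; ring)
      have ih' := ih (-(l : ℂ) - 2 * k - 3) hyp1 hyp2
      have step1 : (∑ i ∈ Finset.range (k + 1), Bc k l i *
            ((2 * (l : ℂ) + 2 * k + 3 - 2 * i)⁻¹ * (2 * (l : ℂ) + 1)⁻¹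
              - (2 * (i : ℂ) + 2)⁻¹ * (2 * (l : ℂ) + 1)⁻¹))
          = (-((2 * (l : ℂ) + 1)⁻¹)) * ∑ i ∈ Finset.range (k + 1), Bc k l i *
              (((-(l : ℂ) - 2 * k - 3) + 2 * (i : ℂ) - l)⁻¹
                - ((-(l : ℂ) - 2 * k - 3) + 2 * (k : ℂ) - 2 * i + 1 + l)⁻¹) := by
        rw [Finset.mul_sum]
        refine Finset.sum_congr rfl fun i _ => ?_
        rw [show (-(l : ℂ) - 2 * k - 3) + 2 * (i : ℂ) - l = -(2 * (l : ℂ) + 2 * k + 3 - 2 * i) from by ring,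
          show (-(l : ℂ) - 2 * k - 3) + 2 * (k : ℂ) - 2 * (i : ℂ) + 1 + l
            = -(2 * (i : ℂ) + 2) from by ring, inv_neg, inv_neg]
        ring
      rw [step1, ← ih']
      have step2 : (∏ j ∈ Finset.range (k + 1), (((-(l : ℂ) - 2 * k - 3) - l + 2 * (j : ℂ))⁻¹ *
            ((-(l : ℂ) - 2 * k - 3) + l + 1 + 2 * (j : ℂ))⁻¹))
          = ((∏ j ∈ Finset.range (k + 1), (2 * (j : ℂ) - 2 * l - 2 * k - 3)) *
              ∏ j ∈ Finset.range (k + 1), (2 * (j : ℂ) - 2 * k - 2))⁻¹ := by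
        rw [mul_inv, ← Finset.prod_inv_distrib, ← Finset.prod_inv_distrib, ← Finset.prod_mul_distrib]
        refine Finset.prod_congr rfl fun j _ => ?_
        rw [show (-(l : ℂ) - 2 * k - 3) - l + 2 * (j : ℂ) = 2 * (j : ℂ) - 2 * l - 2 * k - 3 from by ring,
          show (-(l : ℂ) - 2 * k - 3) + l + 1 + 2 * (j : ℂ) = 2 * (j : ℂ) - 2 * k - 2 from by ring]
      rw [step2, prod_combo]
      have hBval : Bc (k + 1) l 0
          = ((2 : ℂ) ^ (k + 1))⁻¹ * (((k + 1).factorial : ℂ))⁻¹ *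
              (∏ j ∈ Finset.range (k + 1), (2 * (l : ℂ) + 3 + 2 * j))⁻¹ *
              (2 * (l : ℂ) + 1)⁻¹ := by
        unfold Bc
        rw [Finset.prod_range_succ']
        have hpr : (∏ j ∈ Finset.range (k + 1), (2 * (l : ℂ) + 1 + 2 * ((j + 1 : ℕ) : ℂ) - 2 * ((0 : ℕ) : ℂ)))
            = ∏ j ∈ Finset.range (k + 1), (2 * (l : ℂ) + 3 + 2 * j) := by
          refine Finset.prod_congr rfl fun j _ => ?_
          push_cast; ring
        rw [hpr, Nat.sub_zero]
        simp only [mul_inv, Nat.cast_zero, pow_zero, Nat.factorial_zero, Nat.cast_one]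
        ring
      rw [hBval]
      ring
    rw [hS1, hS2]
    have hR : (∑ i ∈ Finset.range (k + 1 + 1), Bc (k + 1) l i *
          ((A + 2 * (i : ℂ) - l)⁻¹ - (A + 2 * ((k + 1 : ℕ) : ℂ) - 2 * i + 1 + l)⁻¹))
        = (∑ i ∈ Finset.range (k + 1 + 1), (Bc (k + 1) l i * (A + 2 * (i : ℂ) - l)⁻¹
            - Bc (k + 1) l i * (A + 2 * ((k + 1 : ℕ) : ℂ) - 2 * i + 1 + l)⁻¹)) :=
      Finset.sum_congr rfl fun i _ => by ring
    conv_rhs => rw [hR, Finset.sum_sub_distrib, Finset.sum_range_succ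
        (f := fun i => Bc (k + 1) l i * (A + 2 * (i : ℂ) - (l : ℂ))⁻¹),
      Finset.sum_range_succ'
        (f := fun i => Bc (k + 1) l i * (A + 2 * ((k + 1 : ℕ) : ℂ) - 2 * (i : ℂ) + 1 + (l : ℂ))⁻¹)]
    have hfix : (∑ i ∈ Finset.range (k + 1), Bc (k + 1) l (i + 1) *
          (A + 2 * ((k + 1 : ℕ) : ℂ) - 2 * ((i + 1 : ℕ) : ℂ) + 1 + (l : ℂ))⁻¹)
        = ∑ i ∈ Finset.range (k + 1), Bc (k + 1) l (i + 1) *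
          (A + 2 * (k : ℂ) - 2 * (i : ℂ) + 1 + (l : ℂ))⁻¹ :=
      Finset.sum_congr rfl fun i _ => by
        rw [show A + 2 * ((k + 1 : ℕ) : ℂ) - 2 * ((i + 1 : ℕ) : ℂ) + 1 + (l : ℂ)
            = A + 2 * (k : ℂ) - 2 * (i : ℂ) + 1 + (l : ℂ) from by push_cast; ring]
    rw [hfix]
    push_cast
    ring

lemma Gamma_shift (z : ℂ) (h : ∀ m : ℕ, z ≠ -m) (n : ℕ) :
    Complex.Gamma (z + n) = (∏ j ∈ Finset.range n, (z + j)) * Complex.Gamma z := by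
  induction n with
  | zero => simp
  | succ n ih =>
    have hz : z + n ≠ 0 := by
      intro h0
      exact h n (by linear_combination h0)
    have hcast : z + ((n + 1 : ℕ) : ℂ) = (z + n) + 1 := by push_cast; ring
    rw [hcast, Complex.Gamma_add_one _ hz, ih, Finset.prod_range_succ]
    ring


lemma akli_mul (k l i : ℕ) :
    akli k l i = (((2 * k).factorial : ℂ) * (2 * (l : ℂ) + 1)) * Bc k l i := by
  have hz : ∀ m : ℕ, ((l : ℂ) - i + 1 / 2) ≠ -m := by
    intro m hm
    have h2 : ((2 * (l : ℤ) - 2 * i + 2 * m + 1 : ℤ) : ℂ) ≠ 0 := Int.cast_ne_zero.mpr (by omega)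
    apply h2
    push_cast
    linear_combination 2 * hm
  have hsh := Gamma_shift ((l : ℂ) - i + 1 / 2) hz (k + 1)
  have harg : (l : ℂ) + k - i + 3 / 2 = ((l : ℂ) - i + 1 / 2) + ((k + 1 : ℕ) : ℂ) := by
    push_cast; ring
  have hzprod : (∏ j ∈ Finset.range (k + 1), (2 * (l : ℂ) + 1 + 2 * j - 2 * i))
      = (∏ j ∈ Finset.range (k + 1), (((l : ℂ) - i + 1 / 2) + j)) * (2 : ℂ) ^ (k + 1) := by
    have h : (∏ j ∈ Finset.range (k + 1), (2 * (l : ℂ) + 1 + 2 * j - 2 * i))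
        = ∏ j ∈ Finset.range (k + 1), ((((l : ℂ) - i + 1 / 2) + j) * 2) := by
      refine Finset.prod_congr rfl fun j _ => ?_
      ring
    rw [h, Finset.prod_mul_distrib, Finset.prod_const, Finset.card_range]
  have hG : Complex.Gamma ((l : ℂ) - i + 1 / 2) ≠ 0 := Complex.Gamma_ne_zero hz
  unfold akli Bc
  rw [harg, hsh, hzprod]
  rw [show (2 : ℂ) ^ (2 * k + 1) = (2 : ℂ) ^ k * (2 : ℂ) ^ k * 2 from by ring,
    show (2 : ℂ) ^ (k + 1) = (2 : ℂ) ^ k * 2 from by ring]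
  have hc := mul_inv_cancel₀ hG
  generalize (2 : ℂ) ^ k = w at *
  linear_combination
    ((-1 : ℂ) ^ i * (2 * (l : ℂ) + 1) * (((2 * k).factorial : ℂ)) * w⁻¹ * w⁻¹ * (2 : ℂ)⁻¹ *
        ((i.factorial : ℂ))⁻¹ * (((k - i).factorial : ℂ))⁻¹ *
        (∏ j ∈ Finset.range (k + 1), (((l : ℂ) - i + 1 / 2) + j))⁻¹) * hc

lemma akli_eq (k l i : ℕ) :
    akli k l i / (((2 * k).factorial : ℂ) * (2 * (l : ℂ) + 1)) = Bc k l i := by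
  have hfac3 : (((2 * k).factorial : ℂ)) ≠ 0 := Nat.cast_ne_zero.mpr (2 * k).factorial_ne_zero
  have h2l : 2 * (l : ℂ) + 1 ≠ 0 := ne_zero_of_int _ (2 * l + 1) (by omega) (by push_cast; ring)
  rw [akli_mul]
  exact mul_div_cancel_left₀ _ (mul_ne_zero hfac3 h2l)

theorem stmt13 (k l : ℕ) (A : ℂ)
    (hA1 : ∀ m : ℕ, A ≠ (l : ℂ) - 2 * m)
    (hA2 : ∀ m : ℕ, A ≠ -(l : ℂ) - 1 - 2 * m) :
    fkl k l A = ∑ i ∈ Finset.range (k + 1),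
      (akli k l i / (((2 * k).factorial : ℂ) * (2 * (l : ℂ) + 1)) / (A + 2 * i - l)
        + (-(akli k l i / (((2 * k).factorial : ℂ) * (2 * (l : ℂ) + 1))))
            / (A + 2 * k - 2 * i + 1 + l)) := by
  have hz1 : ∀ m : ℕ, ((A + 1 + l) / 2) ≠ -m := by
    intro m hm
    exact hA2 m (by linear_combination 2 * hm)
  have hz2 : ∀ m : ℕ, ((A - l) / 2) ≠ -m := by
    intro m hm
    exact hA1 m (by linear_combination 2 * hm)
  have harg1 : (A + 2 * (k : ℂ) + 3 + l) / 2 = (A + 1 + l) / 2 + ((k + 1 : ℕ) : ℂ) := by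
    push_cast; ring
  have harg2 : (A + 2 * (k : ℂ) + 2 - l) / 2 = (A - l) / 2 + ((k + 1 : ℕ) : ℂ) := by
    push_cast; ring
  have hG1 : Complex.Gamma ((A + 1 + l) / 2) ≠ 0 := Complex.Gamma_ne_zero hz1
  have hG2 : Complex.Gamma ((A - l) / 2) ≠ 0 := Complex.Gamma_ne_zero hz2
  have h1 : ∀ j : ℕ, j ≤ k → A - l + 2 * (j : ℂ) ≠ 0 := by
    intro j _ h0
    exact hA1 j (by linear_combination h0)
  have h2 : ∀ j : ℕ, j ≤ k → A + l + 1 + 2 * (j : ℂ) ≠ 0 := by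
    intro j _ h0
    exact hA2 j (by linear_combination h0)
  have hprod1 : (∏ j ∈ Finset.range (k + 1), (A + l + 1 + 2 * (j : ℂ)))
      = (∏ j ∈ Finset.range (k + 1), ((A + 1 + l) / 2 + j)) * (2 : ℂ) ^ (k + 1) := by
    have h : (∏ j ∈ Finset.range (k + 1), (A + l + 1 + 2 * (j : ℂ)))
        = ∏ j ∈ Finset.range (k + 1), (((A + 1 + l) / 2 + j) * 2) := by
      refine Finset.prod_congr rfl fun j _ => ?_
      ring
    rw [h, Finset.prod_mul_distrib, Finset.prod_const, Finset.card_range]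
  have hprod2 : (∏ j ∈ Finset.range (k + 1), (A - l + 2 * (j : ℂ)))
      = (∏ j ∈ Finset.range (k + 1), ((A - l) / 2 + j)) * (2 : ℂ) ^ (k + 1) := by
    have h : (∏ j ∈ Finset.range (k + 1), (A - l + 2 * (j : ℂ)))
        = ∏ j ∈ Finset.range (k + 1), (((A - l) / 2 + j) * 2) := by
      refine Finset.prod_congr rfl fun j _ => ?_
      ring
    rw [h, Finset.prod_mul_distrib, Finset.prod_const, Finset.card_range]
  have hP1 : (∏ j ∈ Finset.range (k + 1), (A + l + 1 + 2 * (j : ℂ))) ≠ 0 :=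
    Finset.prod_ne_zero_iff.mpr fun j hj => h2 j (by have := Finset.mem_range.mp hj; omega)
  have hP2 : (∏ j ∈ Finset.range (k + 1), (A - l + 2 * (j : ℂ))) ≠ 0 :=
    Finset.prod_ne_zero_iff.mpr fun j hj => h1 j (by have := Finset.mem_range.mp hj; omega)
  have h2ne : (2 : ℂ) ≠ 0 := two_ne_zero
  calc fkl k l A
      = ∏ j ∈ Finset.range (k + 1), ((A - l + 2 * (j : ℂ))⁻¹ * (A + l + 1 + 2 * (j : ℂ))⁻¹) := by
        unfold fkl
        rw [harg1, harg2, Gamma_shift _ hz1 (k + 1), Gamma_shift _ hz2 (k + 1)]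
        have hsplit : (∏ j ∈ Finset.range (k + 1), ((A - l + 2 * (j : ℂ))⁻¹ * (A + l + 1 + 2 * (j : ℂ))⁻¹))
            = (∏ j ∈ Finset.range (k + 1), (A - l + 2 * (j : ℂ)))⁻¹ *
                (∏ j ∈ Finset.range (k + 1), (A + l + 1 + 2 * (j : ℂ)))⁻¹ := by
          rw [← Finset.prod_inv_distrib, ← Finset.prod_inv_distrib, ← Finset.prod_mul_distrib]
        rw [hsplit, hprod1, hprod2]
        rw [show (2 : ℂ) ^ (2 * k + 2) = (2 : ℂ) ^ k * (2 : ℂ) ^ k * 4 from by ring,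
          show (2 : ℂ) ^ (k + 1) = (2 : ℂ) ^ k * 2 from by ring]
        have e1 := mul_inv_cancel₀ hG1
        have e2 := mul_inv_cancel₀ hG2
        generalize (2 : ℂ) ^ k = w at *
        linear_combination
          ((∏ j ∈ Finset.range (k + 1), ((A - l) / 2 + j))⁻¹ *
            (∏ j ∈ Finset.range (k + 1), ((A + 1 + l) / 2 + j))⁻¹ * w⁻¹ * w⁻¹ * (4 : ℂ)⁻¹ *
            (Complex.Gamma ((A - l) / 2) * (Complex.Gamma ((A - l) / 2))⁻¹)) * e1
          + ((∏ j ∈ Finset.range (k + 1), ((A - l) / 2 + j))⁻¹ *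
            (∏ j ∈ Finset.range (k + 1), ((A + 1 + l) / 2 + j))⁻¹ * w⁻¹ * w⁻¹ * (4 : ℂ)⁻¹) * e2
    _ = ∑ i ∈ Finset.range (k + 1),
          Bc k l i * ((A + 2 * (i : ℂ) - l)⁻¹ - (A + 2 * (k : ℂ) - 2 * i + 1 + l)⁻¹) :=
        main_pf l k A h1 h2
    _ = ∑ i ∈ Finset.range (k + 1),
          (akli k l i / (((2 * k).factorial : ℂ) * (2 * (l : ℂ) + 1)) / (A + 2 * i - l)
            + (-(akli k l i / (((2 * k).factorial : ℂ) * (2 * (l : ℂ) + 1))))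
                / (A + 2 * k - 2 * i + 1 + l)) := by
        refine Finset.sum_congr rfl fun i _ => ?_
        rw [akli_eq k l i]
        ring
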